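/- arXiv:1909.12738 — 2 statements merged into one kernel-verified Lean document; each statement's English description precedes it below -/
import Mathlib

section
/- Valid firings of a DAW-net correspond exactly to transitions of its PDDL encoding: (1) if (M,η) →t (M',η') is a valid firing of W, then there is a ground instance a_t of the action template α_t such that (Ψ(M,η), a_t, Ψ(M',η')) is in the state-transition function γ of the planning domain PDDL(W); and (2) conversely, if (s, a_t, s') ∈ γ for some ground instance a_t of α_t, then Ψ⁻¹(s) →t Ψ⁻¹(s') is a valid firing of W. -/
/-- Terms of the guard language: variables or constants. -/
inductive GTerm (V O : Type) where
  | var (v : V)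
  | const (o : O)

/-- Guards of the DAW-net guard language. -/
inductive Guard (V O : Type) where
  | tru
  | defd (v : V)
  | eq (v : V) (t : GTerm V O)
  | le (t1 t2 : GTerm V O)
  | not (g : Guard V O)
  | and (g1 g2 : Guard V O)

/-- Evaluation of a term under a (partial) assignment. -/
def evalT {V O : Type} (η : V → Option O) : GTerm V O → Option O
  | .var v => η v
  | .const o => some o

/-- DAW-net semantics of guards. -/
def gsat {V O : Type} (rel : O → O → Prop) (η : V → Option O) : Guard V O → Prop
  | .tru => True
  | .defd v => (η v).isSome
  | .eq v t => ∃ o, η v = some o ∧ evalT η t = some o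
  | .le t1 t2 => ∃ o1 o2, evalT η t1 = some o1 ∧ evalT η t2 = some o2 ∧ rel o1 o2
  | .not g => ¬ gsat rel η g
  | .and g1 g2 => gsat rel η g1 ∧ gsat rel η g2

/-- PDDL precondition formulas. -/
inductive PForm (V O : Type) where
  | tru
  | eqNull (v : V)
  | eqAtom (v : V) (t : GTerm V O)
  | ordAtom (t1 t2 : GTerm V O)
  | not (f : PForm V O)
  | and (f1 f2 : PForm V O)

/-- Translation of guards into PDDL preconditions. -/
def transG {V O : Type} : Guard V O → PForm V O
  | .tru => .tru
  | .defd v => .not (.eqNull v)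
  | .eq v t => .and (.not (.eqNull v)) (.eqAtom v t)
  | .le t1 t2 => .ordAtom t1 t2
  | .not g => .not (transG g)
  | .and g1 g2 => .and (transG g1) (transG g2)

/-- Satisfaction of PDDL preconditions in a planning state. -/
def psat {V O : Type} (rel : O → O → Prop) (s : V → Option O) : PForm V O → Prop
  | .tru => True
  | .eqNull v => s v = none
  | .eqAtom v t => s v = evalT s t
  | .ordAtom t1 t2 => ∃ o1 o2, evalT s t1 = some o1 ∧ evalT s t2 = some o2 ∧ rel o1 o2
  | .not f => ¬ psat rel s f
  | .and f1 f2 => psat rel s f1 ∧ psat rel s f2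

/-- A DAW-net with syntactic guards. -/
structure DAWNet (P T V O : Type) where
  pre : T → Set P
  post : T → Set P
  wr : T → V → Option (Set O)
  gd : T → Guard V O

/-- Valid firing of a transition in a 1-safe DAW-net (the marking update is the
simplified one valid under the 1-safety assumption: output places get exactly one
token). -/
def ValidFiring {P T V O : Type} (rel : O → O → Prop) (W : DAWNet P T V O)
    (M : P → ℕ) (η : V → Option O) (t : T) (M' : P → ℕ) (η' : V → Option O) : Prop :=
  (∀ p ∈ W.pre t, 0 < M p) ∧
  gsat rel η (W.gd t) ∧
  (∀ p, (p ∈ W.pre t ∧ p ∉ W.post t → M' p = 0) ∧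
        (p ∈ W.post t → M' p = 1) ∧
        (p ∉ W.pre t ∧ p ∉ W.post t → M' p = M p)) ∧
  (∀ v (s : Set O), W.wr t v = some s →
      (s = ∅ → η' v = none) ∧ (s.Nonempty → ∃ o ∈ s, η' v = some o)) ∧
  (∀ v, W.wr t v = none → η' v = η v)

/-- Planning states: a boolean per place and a value (possibly `null = none`) per
variable. -/
abbrev PState (P V O : Type) := (P → Bool) × (V → Option O)

/-- The parameters `z` of a ground instance of the action template `α_t` : one value per
written variable, taken from the rigid relation `wr_{t,v}` (which is `wr t v` if
nonempty and `{null}` if `t` deletes `v`); parameters of unmentioned variables are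
normalized to `null`. -/
def groundOk {P T V O : Type} (W : DAWNet P T V O) (t : T) (z : V → Option O) : Prop :=
  (∀ v (s : Set O), W.wr t v = some s →
      (s.Nonempty → ∃ o ∈ s, z v = some o) ∧ (s = ∅ → z v = none)) ∧
  (∀ v, W.wr t v = none → z v = none)

/-- The state-transition function `γ` of the planning domain `PDDL(W)` : `PlanStep rel W
s t z s'` holds iff the ground action of `α_t` with parameters `z` is applicable in `s`
(precondition: translated guard, parameter ranges, tokens in the input places) and `s'`
results from applying its effects to `s`. -/
def PlanStep {P T V O : Type} (rel : O → O → Prop) (W : DAWNet P T V O)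
    (s : PState P V O) (t : T) (z : V → Option O) (s' : PState P V O) : Prop :=
  groundOk W t z ∧
  psat rel s.2 (transG (W.gd t)) ∧
  (∀ p ∈ W.pre t, s.1 p = true) ∧
  (∀ v, (W.wr t v ≠ none → s'.2 v = z v) ∧ (W.wr t v = none → s'.2 v = s.2 v)) ∧
  (∀ p, (p ∈ W.pre t ∧ p ∉ W.post t → s'.1 p = false) ∧
        (p ∈ W.post t → s'.1 p = true) ∧
        (p ∉ W.pre t ∧ p ∉ W.post t → s'.1 p = s.1 p))

/-- The map `Ψ` from DAW-net states to planning states. -/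
def PsiS {P V O : Type} (M : P → ℕ) (η : V → Option O) : PState P V O :=
  (fun p => decide (0 < M p), η)

/-- The inverse of `Ψ` on markings (for 1-safe nets). -/
def invM {P V O : Type} (s : PState P V O) : P → ℕ := fun p => if s.1 p then 1 else 0

/-- Query preservation: a guard holds iff its translation holds. -/
lemma gsat_iff_psat {V O : Type} (rel : O → O → Prop) (η : V → Option O) :
    ∀ g : Guard V O, gsat rel η g ↔ psat rel η (transG g) := by
  intro g
  induction g with
  | tru => simp [gsat, transG, psat]
  | defd v =>
      simp [gsat, transG, psat, Option.isSome_iff_ne_none]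
  | eq v t =>
      simp only [gsat, transG, psat]
      constructor
      · rintro ⟨o, h1, h2⟩
        exact ⟨by simp [h1], h1.trans h2.symm⟩
      · rintro ⟨h1, h2⟩
        rcases Option.ne_none_iff_exists'.mp h1 with ⟨o, ho⟩
        exact ⟨o, ho, h2 ▸ ho⟩
  | le t1 t2 => simp [gsat, transG, psat]
  | not g ih => simp [gsat, transG, psat, ih]
  | and g1 g2 ih1 ih2 => simp [gsat, transG, psat, ih1, ih2]

/-- Valid firings of a 1-safe DAW-net correspond exactly to transitions of its PDDL
encoding: (1) every valid firing is matched by a ground action of the corresponding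
action template between the `Ψ`-images of the states; (2) every `γ`-transition along a
ground action of `α_t` is matched by a valid firing of `t` between the `Ψ⁻¹`-images. -/
theorem firing_iff_plan_step {P T V O : Type} (rel : O → O → Prop)
    (W : DAWNet P T V O) :
    (∀ (M : P → ℕ) (η : V → Option O) (t : T) (M' : P → ℕ) (η' : V → Option O),
      (∀ p, M p ≤ 1) → ValidFiring rel W M η t M' η' →
      ∃ z, PlanStep rel W (PsiS M η) t z (PsiS M' η')) ∧
    (∀ (s s' : PState P V O) (t : T) (z : V → Option O),
      PlanStep rel W s t z s' →
      ValidFiring rel W (invM s) s.2 t (invM s') s'.2) := by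
  classical
  constructor
  · rintro M η t M' η' _hsafe ⟨hpre, hgd, hmark, hwr, hnone⟩
    refine ⟨fun v => if W.wr t v = none then none else η' v, ?_, ?_, ?_, ?_, ?_⟩
    · constructor
      · intro v st hst
        have := hwr v st hst
        simp only [hst]
        constructor
        · intro hne
          rcases this.2 hne with ⟨o, ho, ho'⟩
          exact ⟨o, ho, by simp [ho']⟩
        · intro he
          simp [this.1 he]
      · intro v hv; simp [hv]
    · exact (gsat_iff_psat rel η _).mp hgd
    · intro p hp
      simp [PsiS, hpre p hp]
    · intro v
      constructor
      · intro hv; simp [PsiS, hv]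
      · intro hv; simp [PsiS, hnone v hv]
    · intro p
      have h := hmark p
      refine ⟨fun hp => ?_, fun hp => ?_, fun hp => ?_⟩
      · simp [PsiS, h.1 hp]
      · simp [PsiS, h.2.1 hp]
      · simp [PsiS, h.2.2 hp]
  · rintro s s' t z ⟨⟨hg1, hg2⟩, hgd, hpre, hvar, hmark⟩
    refine ⟨?_, ?_, ?_, ?_, ?_⟩
    · intro p hp; simp [invM, hpre p hp]
    · exact (gsat_iff_psat rel s.2 _).mpr hgd
    · intro p
      have h := hmark p
      refine ⟨fun hp => ?_, fun hp => ?_, fun hp => ?_⟩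
      · simp [invM, h.1 hp]
      · simp [invM, h.2.1 hp]
      · simp [invM, h.2.2 hp]
    · intro v st hst
      have hz : s'.2 v = z v := (hvar v).1 (by simp [hst])
      have := hg1 v st hst
      constructor
      · intro he; rw [hz]; exact this.2 he
      · intro hne
        rcases this.1 hne with ⟨o, ho, ho'⟩
        exact ⟨o, ho, hz.trans ho'⟩
    · intro v hv; exact (hvar v).2 hv
end

section
/- Trace equivalence of the DAW-net reachability graph with the PDDL transition system: for any 1-safe DAW-net W, the reachability graph RG_W and the transition system TS_{PDDL(W)} derived from the planning encoding are trace equivalent via the mapping that sends states through Ψ and transitions to themselves; i.e., every path of RG_W maps to a path of TS_{PDDL(W)}, and every path of TS_{PDDL(W)} arises as the image of a path of RG_W. -/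
/-- Paths of the reachability graph `RG_W` from the initial state `init`, recorded as
the list of successive (transition, reached state) pairs. -/
inductive RGPath {P T V O : Type} (rel : O → O → Prop) (W : DAWNet P T V O)
    (init : (P → ℕ) × (V → Option O)) :
    ((P → ℕ) × (V → Option O)) → List (T × (P → ℕ) × (V → Option O)) → Prop
  | nil : RGPath rel W init init []
  | cons {s : (P → ℕ) × (V → Option O)} {l : List (T × (P → ℕ) × (V → Option O))}
      {t : T} {M' : P → ℕ} {η' : V → Option O} :
      RGPath rel W init s l → ValidFiring rel W s.1 s.2 t M' η' →
      RGPath rel W init (M', η') (l ++ [(t, M', η')])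

/-- Paths of the transition system `TS_{PDDL(W)}` from the initial planning state. -/
inductive TSPath {P T V O : Type} (rel : O → O → Prop) (W : DAWNet P T V O)
    (init : PState P V O) : PState P V O → List (T × PState P V O) → Prop
  | nil : TSPath rel W init init []
  | cons {s : PState P V O} {l : List (T × PState P V O)} {t : T} {s' : PState P V O} :
      TSPath rel W init s l → (∃ z, PlanStep rel W s t z s') →
      TSPath rel W init s' (l ++ [(t, s')])

lemma psat_transG {V O : Type} (rel : O → O → Prop) (η : V → Option O) :
    ∀ g : Guard V O, psat rel η (transG g) ↔ gsat rel η g := by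
  intro g
  induction g with
  | tru => exact Iff.rfl
  | defd v =>
      simp [transG, psat, gsat, Option.isSome_iff_ne_none]
  | eq v t =>
      show (¬ η v = none ∧ η v = evalT η t) ↔ _
      constructor
      · rintro ⟨h1, h2⟩
        rcases Option.ne_none_iff_exists'.mp h1 with ⟨o, ho⟩
        exact ⟨o, ho, by rw [← h2, ho]⟩
      · rintro ⟨o, h1, h2⟩
        exact ⟨by simp [h1], by rw [h1, h2]⟩
  | le t1 t2 => exact Iff.rfl
  | not g ih => exact not_congr ih
  | and g1 g2 ih1 ih2 => exact and_congr ih1 ih2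

lemma firing_to_plan {P T V O : Type} (rel : O → O → Prop) (W : DAWNet P T V O)
    {M : P → ℕ} {η : V → Option O} {t : T} {M' : P → ℕ} {η' : V → Option O}
    (h : ValidFiring rel W M η t M' η') :
    ∃ z, PlanStep rel W (PsiS M η) t z (PsiS M' η') := by
  classical
  obtain ⟨hpre, hg, hmark, hwr, hnw⟩ := h
  refine ⟨fun v => if W.wr t v = none then none else η' v, ⟨?_, ?_⟩, ?_, ?_, ?_, ?_⟩
  · intro v s hs
    have hne : ¬ W.wr t v = none := by simp [hs]
    simp only [if_neg hne]
    exact ⟨(hwr v s hs).2, (hwr v s hs).1⟩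
  · intro v hv
    simp [hv]
  · exact (psat_transG rel η _).mpr hg
  · intro p hp
    simpa [PsiS] using hpre p hp
  · intro v
    constructor
    · intro hv
      simp [PsiS, if_neg hv]
    · intro hv
      simpa [PsiS] using hnw v hv
  · intro p
    refine ⟨?_, ?_, ?_⟩
    · intro hp; simp [PsiS, (hmark p).1 hp]
    · intro hp; simp [PsiS, (hmark p).2.1 hp]
    · intro hp; simp [PsiS, (hmark p).2.2 hp]

lemma plan_to_firing {P T V O : Type} (rel : O → O → Prop) (W : DAWNet P T V O)
    {M : P → ℕ} {η : V → Option O} {t : T} {z : V → Option O} {s' : PState P V O}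
    (hM : ∀ p, M p ≤ 1)
    (h : PlanStep rel W (PsiS M η) t z s') :
    ValidFiring rel W M η t (fun p => if s'.1 p then 1 else 0) s'.2 ∧
      PsiS (fun p => if s'.1 p then 1 else 0) s'.2 = s' ∧
      (∀ p, (if s'.1 p then (1 : ℕ) else 0) ≤ 1) := by
  obtain ⟨⟨hg1, hg2⟩, hps, hpre, hwr, hmark⟩ := h
  refine ⟨⟨?_, ?_, ?_, ?_, ?_⟩, ?_, ?_⟩
  · intro p hp
    have := hpre p hp
    simp [PsiS] at this
    exact this
  · exact (psat_transG rel η _).mp hps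
  · intro p
    refine ⟨?_, ?_, ?_⟩
    · intro hp; simp [(hmark p).1 hp]
    · intro hp; simp [(hmark p).2.1 hp]
    · intro hp
      have h1 : s'.1 p = decide (0 < M p) := (hmark p).2.2 hp
      show (if s'.1 p = true then (1 : ℕ) else 0) = M p
      rw [h1]
      rcases Nat.eq_zero_or_pos (M p) with h0 | h0
      · simp [h0]
      · have : M p = 1 := le_antisymm (hM p) h0
        simp [this]
  · intro v σ hσ
    have hne : W.wr t v ≠ none := by simp [hσ]
    have hz := (hwr v).1 hne
    refine ⟨fun he => ?_, fun hne' => ?_⟩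
    · rw [hz]; exact (hg1 v σ hσ).2 he
    · obtain ⟨o, ho, hzo⟩ := (hg1 v σ hσ).1 hne'
      exact ⟨o, ho, by rw [hz, hzo]⟩
  · intro v hv
    simpa [PsiS] using (hwr v).2 hv
  · refine Prod.ext ?_ rfl
    funext p
    cases hb : s'.1 p <;> simp [PsiS, hb]
  · intro p
    split <;> omega

lemma rg_backward_aux {P T V O : Type} (rel : O → O → Prop)
    (W : DAWNet P T V O) (start : P) (M0 : P → ℕ)
    (hM0 : M0 start = 1 ∧ ∀ p, p ≠ start → M0 p = 0)
    (s' : PState P V O) (l' : List (T × PState P V O))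
    (hpath : TSPath rel W (PsiS M0 (fun _ => none)) s' l') :
    ∃ (s : (P → ℕ) × (V → Option O)) (l : List (T × (P → ℕ) × (V → Option O))),
      RGPath rel W (M0, fun _ => none) s l ∧ PsiS s.1 s.2 = s' ∧
      (l.map fun x => (x.1, PsiS x.2.1 x.2.2)) = l' ∧ ∀ p, s.1 p ≤ 1 := by
  induction hpath with
  | nil =>
      refine ⟨(M0, fun _ => none), [], RGPath.nil, rfl, rfl, fun p => ?_⟩
      rcases eq_or_ne p start with h | h
      · simp [h, hM0.1]
      · simp [hM0.2 p h]
  | @cons sm lm tm sm' hp hstep ih =>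
      obtain ⟨s, l, hrg, hpsi, hmap, hbd⟩ := ih
      obtain ⟨z, hz⟩ := hstep
      rw [← hpsi] at hz
      obtain ⟨hvf, hpsi', hbd'⟩ := plan_to_firing rel W hbd hz
      refine ⟨((fun p => if sm'.1 p then 1 else 0), sm'.2),
        l ++ [(tm, (fun p => if sm'.1 p then 1 else 0), sm'.2)],
        RGPath.cons hrg hvf, hpsi', ?_, hbd'⟩
      simp [hmap, hpsi']

/-- Trace equivalence of the DAW-net reachability graph with the PDDL transition system:
for a 1-safe DAW-net `W` (initial state: one token in `start`, empty assignment), every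
path of `RG_W` maps under `Ψ` (identity on transition labels) to a path of
`TS_{PDDL(W)}`, and every path of `TS_{PDDL(W)}` arises as the image of a path of
`RG_W`. -/
theorem rg_pddl_trace_equivalent {P T V O : Type} (rel : O → O → Prop)
    (W : DAWNet P T V O) (start : P) (M0 : P → ℕ)
    (hM0 : M0 start = 1 ∧ ∀ p, p ≠ start → M0 p = 0) :
    (∀ (s : (P → ℕ) × (V → Option O)) (l : List (T × (P → ℕ) × (V → Option O))),
      RGPath rel W (M0, fun _ => none) s l →
      TSPath rel W (PsiS M0 (fun _ => none)) (PsiS s.1 s.2)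
        (l.map fun x => (x.1, PsiS x.2.1 x.2.2))) ∧
    (∀ (s' : PState P V O) (l' : List (T × PState P V O)),
      TSPath rel W (PsiS M0 (fun _ => none)) s' l' →
      ∃ (s : (P → ℕ) × (V → Option O)) (l : List (T × (P → ℕ) × (V → Option O))),
        RGPath rel W (M0, fun _ => none) s l ∧ PsiS s.1 s.2 = s' ∧
        (l.map fun x => (x.1, PsiS x.2.1 x.2.2)) = l') := by
  constructor
  · intro s l hpath
    induction hpath with
    | nil => exact TSPath.nil
    | @cons sm lm tm M' η' hp hf ih =>
        rw [List.map_append]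
        exact TSPath.cons ih (firing_to_plan rel W hf)
  · intro s' l' hpath
    obtain ⟨s, l, hrg, hpsi, hmap, _⟩ :=
      rg_backward_aux rel W start M0 hM0 s' l' hpath
    exact ⟨s, l, hrg, hpsi, hmap⟩
end
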